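/- The group of units of Z[τ] is exactly {±τ^k : k ∈ ℤ}, i.e., it is generated by -1 and τ. -/

import Mathlib

noncomputable def tau : ℝ := (Real.sqrt 5 - 1) / 2

def Ztau : Set ℝ := {x | ∃ a b : ℤ, x = a + b * tau}

lemma sqrt5_sq : Real.sqrt 5 ^ 2 = 5 := Real.sq_sqrt (by norm_num)

lemma tau_pos : 0 < tau := by
  have h : (1:ℝ) < Real.sqrt 5 := by
    rw [show (1:ℝ) = Real.sqrt 1 by simp]
    exact Real.sqrt_lt_sqrt (by norm_num) (by norm_num)
  unfold tau; linarith

lemma tau_ne : tau ≠ 0 := ne_of_gt tau_pos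

lemma tau_sq : tau ^ 2 = 1 - tau := by
  unfold tau
  have := sqrt5_sq
  nlinarith [this]

lemma tau_inv_eq : tau⁻¹ = 1 + tau := by
  apply inv_eq_of_mul_eq_one_right
  have := tau_sq
  nlinarith [this]

lemma irr_tau : Irrational tau := by
  have h5 : Irrational (Real.sqrt 5) := by
    have : Nat.Prime 5 := by norm_num
    exact this.irrational_sqrt
  have h1 : Irrational (Real.sqrt 5 - 1) := by
    simpa using h5.sub_intCast 1
  unfold tau
  have h2 : Irrational ((Real.sqrt 5 - 1) / (2:ℤ)) := h1.div_intCast (by norm_num)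
  simpa using h2

lemma indep (a b : ℤ) (h : (a:ℝ) + b * tau = 0) : a = 0 ∧ b = 0 := by
  by_cases hb : b = 0
  · subst hb
    simp at h
    exact ⟨by exact_mod_cast h, rfl⟩
  · exfalso
    apply irr_tau
    refine ⟨(-a : ℚ) / b, ?_⟩
    have hbR : (b:ℝ) ≠ 0 := Int.cast_ne_zero.mpr hb
    push_cast
    field_simp
    linarith [h]

lemma Ztau_mul {x y : ℝ} (hx : x ∈ Ztau) (hy : y ∈ Ztau) : x * y ∈ Ztau := by
  obtain ⟨a, b, rfl⟩ := hx
  obtain ⟨c, d, rfl⟩ := hy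
  refine ⟨a*c + b*d, a*d + b*c - b*d, ?_⟩
  push_cast
  linear_combination ((b:ℝ)*d) * tau_sq

lemma Ztau_neg {x : ℝ} (hx : x ∈ Ztau) : -x ∈ Ztau := by
  obtain ⟨a, b, rfl⟩ := hx
  exact ⟨-a, -b, by push_cast; ring⟩

lemma Ztau_pow {x : ℝ} (hx : x ∈ Ztau) (n : ℕ) : x ^ n ∈ Ztau := by
  induction n with
  | zero => exact ⟨1, 0, by norm_num⟩
  | succ n ih => rw [pow_succ]; exact Ztau_mul ih hx

lemma Ztau_zpow (k : ℤ) : tau ^ k ∈ Ztau := by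
  have htau : tau ∈ Ztau := ⟨0, 1, by norm_num⟩
  have hphi : 1 + tau ∈ Ztau := ⟨1, 1, by norm_num⟩
  cases k with
  | ofNat n => rw [Int.ofNat_eq_coe, zpow_natCast]; exact Ztau_pow htau n
  | negSucc n =>
      rw [zpow_negSucc, ← inv_pow, tau_inv_eq]
      exact Ztau_pow hphi (n+1)

lemma step_tau (a b : ℤ) : tau * ((a:ℝ) + b * tau) = (b:ℝ) + ((a - b : ℤ):ℝ) * tau := by
  push_cast
  linear_combination ((b:ℝ)) * tau_sq

lemma step_inv (a b : ℤ) : (1 + tau) * ((a:ℝ) + b * tau) = ((a + b : ℤ):ℝ) + (a:ℝ) * tau := by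
  push_cast
  linear_combination ((b:ℝ)) * tau_sq

lemma key : ∀ n : ℕ, ∀ a b : ℤ, a.natAbs + b.natAbs ≤ n →
    (a^2 - a*b - b^2 = 1 ∨ a^2 - a*b - b^2 = -1) →
    ∃ k : ℤ, (a:ℝ) + b * tau = tau ^ k ∨ (a:ℝ) + b * tau = -tau ^ k := by
  intro n
  induction n with
  | zero =>
      intro a b hn hN
      have ha : a = 0 := by omega
      have hb : b = 0 := by omega
      subst ha; subst hb; simp at hN
  | succ n ih =>
      intro a b hn hN
      by_cases hb0 : b = 0
      · subst hb0
        have ha : a = 1 ∨ a = -1 := by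
          rcases hN with h | h
          · have : a * a = 1 := by nlinarith
            exact mul_self_eq_one_iff.mp this
          · nlinarith
        rcases ha with rfl | rfl
        · exact ⟨0, Or.inl (by norm_num)⟩
        · exact ⟨0, Or.inr (by norm_num)⟩
      by_cases ha0 : a = 0
      · subst ha0
        have hb : b = 1 ∨ b = -1 := by
          rcases hN with h | h
          · nlinarith
          · have : b * b = 1 := by nlinarith
            exact mul_self_eq_one_iff.mp this
        rcases hb with rfl | rfl
        · exact ⟨1, Or.inl (by norm_num)⟩
        · exact ⟨1, Or.inr (by norm_num)⟩
      -- both nonzero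
      have hflip_tau : ((b:ℤ)^2 - b*(a-b) - (a-b)^2 = 1 ∨ b^2 - b*(a-b) - (a-b)^2 = -1) := by
        rcases hN with h | h
        · right; linarith [h, show b^2 - b*(a-b) - (a-b)^2 = -(a^2 - a*b - b^2) by ring]
        · left; linarith [h, show b^2 - b*(a-b) - (a-b)^2 = -(a^2 - a*b - b^2) by ring]
      have hflip_inv : ((a+b)^2 - (a+b)*a - a^2 = 1 ∨ (a+b)^2 - (a+b)*a - a^2 = -1) := by
        rcases hN with h | h
        · right; linarith [h, show (a+b)^2 - (a+b)*a - a^2 = -(a^2 - a*b - b^2) by ring]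
        · left; linarith [h, show (a+b)^2 - (a+b)*a - a^2 = -(a^2 - a*b - b^2) by ring]
      -- tau move: valid when |a-b| < |a|
      have tau_move : (a-b).natAbs < a.natAbs →
          ∃ k : ℤ, (a:ℝ) + b * tau = tau ^ k ∨ (a:ℝ) + b * tau = -tau ^ k := by
        intro hlt
        have hsum : b.natAbs + (a-b).natAbs ≤ n := by omega
        obtain ⟨k, hk⟩ := ih b (a-b) hsum hflip_tau
        have hstep := step_tau a b
        refine ⟨k - 1, ?_⟩
        have hu : (a:ℝ) + b * tau = tau⁻¹ * (tau * ((a:ℝ) + b * tau)) :=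
          (inv_mul_cancel_left₀ tau_ne _).symm
        rcases hk with hk | hk
        · left
          rw [hu, hstep, hk, zpow_sub_one₀ tau_ne]
          ring
        · right
          rw [hu, hstep, hk, zpow_sub_one₀ tau_ne]
          ring
      -- inv move: valid when |a+b| < |b|
      have inv_move : (a+b).natAbs < b.natAbs →
          ∃ k : ℤ, (a:ℝ) + b * tau = tau ^ k ∨ (a:ℝ) + b * tau = -tau ^ k := by
        intro hlt
        have hsum : (a+b).natAbs + a.natAbs ≤ n := by omega
        obtain ⟨k, hk⟩ := ih (a+b) a hsum hflip_inv
        have hstep := step_inv a b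
        refine ⟨k + 1, ?_⟩
        have hu : (a:ℝ) + b * tau = tau * ((1 + tau) * ((a:ℝ) + b * tau)) := by
          have h1 : tau * (1 + tau) = 1 := by nlinarith [tau_sq]
          calc (a:ℝ) + b * tau = (tau * (1+tau)) * ((a:ℝ) + b * tau) := by rw [h1]; ring
            _ = tau * ((1 + tau) * ((a:ℝ) + b * tau)) := by ring
        rcases hk with hk | hk
        · left
          rw [hu, hstep, hk, zpow_add_one₀ tau_ne]
          ring
        · right
          rw [hu, hstep, hk, zpow_add_one₀ tau_ne]
          ring
      rcases lt_trichotomy a 0 with ha | ha | ha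
      · rcases lt_trichotomy b 0 with hb | hb | hb
        · -- a<0, b<0 : tau move if b > 2a
          by_cases h2 : 2*a < b
          · exact tau_move (by omega)
          · exfalso
            push_neg at h2
            rcases hN with h | h <;> nlinarith
        · omega
        · -- a<0, b>0 : inv move if a > -2b
          by_cases h2 : -(2*b) < a
          · exact inv_move (by omega)
          · exfalso
            push_neg at h2
            rcases hN with h | h <;> nlinarith
      · omega
      · rcases lt_trichotomy b 0 with hb | hb | hb
        · -- a>0, b<0 : inv move if a < -2b
          by_cases h2 : a < -(2*b)
          · exact inv_move (by omega)
          · exfalso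
            push_neg at h2
            rcases hN with h | h <;> nlinarith
        · omega
        · -- a>0, b>0 : tau move if b < 2a
          by_cases h2 : b < 2*a
          · exact tau_move (by omega)
          · exfalso
            push_neg at h2
            rcases hN with h | h <;> nlinarith

theorem stmt9 (u : ℝ) :
    (u ∈ Ztau ∧ ∃ w ∈ Ztau, u * w = 1) ↔ ∃ k : ℤ, u = tau ^ k ∨ u = -tau ^ k := by
  constructor
  · rintro ⟨hu, w, hw, huw⟩
    obtain ⟨a, b, rfl⟩ := hu
    obtain ⟨c, d, rfl⟩ := hw
    have hzero : ((a*c + b*d - 1 : ℤ):ℝ) + ((a*d + b*c - b*d : ℤ):ℝ) * tau = 0 := by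
      push_cast
      linear_combination huw + (-((b:ℝ)*d)) * tau_sq
    obtain ⟨e1, e2⟩ := indep _ _ hzero
    have e1' : a*c + b*d = 1 := by omega
    have e2' : a*d + b*c - b*d = 0 := by omega
    have hNM : (a^2 - a*b - b^2) * (c^2 - c*d - d^2) = 1 := by
      linear_combination (a*c + b*d + 1) * e1' + (-(a*d + b*c - b*d) - (a*c+b*d)) * e2'
    have hN : a^2 - a*b - b^2 = 1 ∨ a^2 - a*b - b^2 = -1 := by
      rcases Int.eq_one_or_neg_one_of_mul_eq_one' hNM with ⟨h, _⟩ | ⟨h, _⟩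
      · exact Or.inl h
      · exact Or.inr h
    exact key (a.natAbs + b.natAbs) a b le_rfl hN
  · rintro ⟨k, hk | hk⟩
    · subst hk
      refine ⟨Ztau_zpow k, tau ^ (-k), Ztau_zpow (-k), ?_⟩
      rw [← zpow_add₀ tau_ne]
      simp
    · subst hk
      refine ⟨Ztau_neg (Ztau_zpow k), -(tau ^ (-k)), Ztau_neg (Ztau_zpow (-k)), ?_⟩
      rw [neg_mul_neg, ← zpow_add₀ tau_ne]
      simp
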